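/- Let G ⊂ ℝ^k be bounded open, φ ∈ C¹(ℝ^k, ℝ^n) with φ|_G an imbedding (k ≤ n), and set μ := H^k ⌞ φ(G). Then for every E ⊂ ℝ^n and h ∈ [0,∞): E^{μ,h} ∩ φ(G) = φ( [φ^{-1}(E)]^{(k+h)} ∩ G ), where for S ⊂ ℝ^k, S^{(m)} denotes the set of m-density points of S, i.e., points y with L^k(B_r(y) \ S) = o(r^m) as r → 0+. -/

import Mathlib

open MeasureTheory Metric Filter Set Topology
open scoped ENNReal NNReal

noncomputable section

/-- The support of a measure `μ` on `ℝ^n`: points all of whose balls have positive measure. -/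
def spt {n : ℕ} (μ : Measure (EuclideanSpace ℝ (Fin n))) : Set (EuclideanSpace ℝ (Fin n)) :=
  {x | ∀ r : ℝ, 0 < r → 0 < μ (Metric.ball x r)}

/-- The set of `h`-superdensity points of `E` with respect to `μ`. -/
def sdp {n : ℕ} (μ : Measure (EuclideanSpace ℝ (Fin n))) (h : ℝ)
    (E : Set (EuclideanSpace ℝ (Fin n))) : Set (EuclideanSpace ℝ (Fin n)) :=
  {x | x ∈ spt μ ∧
    Filter.Tendsto
      (fun r : ℝ => μ (Metric.ball x r \ E) / (μ (Metric.ball x r) * ENNReal.ofReal (r ^ h)))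
      (nhdsWithin 0 (Set.Ioi 0)) (nhds 0)}

/-- The base operator `b^{μ,h}` associated to `μ` and `h`. -/
def baseOp {n : ℕ} (μ : Measure (EuclideanSpace ℝ (Fin n))) (h : ℝ)
    (A : Set (EuclideanSpace ℝ (Fin n))) : Set (EuclideanSpace ℝ (Fin n)) :=
  {x | x ∈ spt μ ∧
    0 < Filter.limsup
      (fun r : ℝ => μ (Metric.ball x r ∩ A) / (μ (Metric.ball x r) * ENNReal.ofReal (r ^ h)))
      (nhdsWithin 0 (Set.Ioi 0))}

/-- The matrix of the differential of `φ` at `y`, with columns `Dφ(y)·e_j`. -/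
def Dmat {k n : ℕ} (φ : EuclideanSpace ℝ (Fin k) → EuclideanSpace ℝ (Fin n))
    (y : EuclideanSpace ℝ (Fin k)) : Matrix (Fin n) (Fin k) ℝ :=
  Matrix.of fun i j => fderiv ℝ φ y (EuclideanSpace.single j 1) i

/-- The set of `m`-density points of `S ⊆ ℝ^k` with respect to Lebesgue measure:
points `y` with `L^k(B_r(y) \ S) = o(r^m)` as `r → 0+`. -/
def densityPts {k : ℕ} (m : ℝ) (S : Set (EuclideanSpace ℝ (Fin k))) :
    Set (EuclideanSpace ℝ (Fin k)) :=
  {y | Filter.Tendsto (fun r : ℝ => volume (Metric.ball y r \ S) / ENNReal.ofReal (r ^ m))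
      (nhdsWithin 0 (Set.Ioi 0)) (nhds 0)}

namespace Stmt16Aux

/-- volume is preserved by the identification with the pi type, for arbitrary sets. -/
lemma volume_image_equiv {k : ℕ} (s : Set (EuclideanSpace ℝ (Fin k))) :
    volume (((MeasurableEquiv.toLp 2 (Fin k → ℝ)).symm) '' s) = volume s := by
  have h := (EuclideanSpace.volume_preserving_symm_measurableEquiv_toLp (Fin k)).map_eq
  calc volume (((MeasurableEquiv.toLp 2 (Fin k → ℝ)).symm) '' s)
      = (Measure.map ((MeasurableEquiv.toLp 2 (Fin k → ℝ)).symm) volume)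
          (((MeasurableEquiv.toLp 2 (Fin k → ℝ)).symm) '' s) := by rw [h]
    _ = volume (((MeasurableEquiv.toLp 2 (Fin k → ℝ)).symm) ⁻¹'
          (((MeasurableEquiv.toLp 2 (Fin k → ℝ)).symm) '' s)) :=
        MeasurableEquiv.map_apply _ _
    _ = volume s := by
        rw [Set.preimage_image_eq s ((MeasurableEquiv.toLp 2 (Fin k → ℝ)).symm).injective]

lemma hausdorff_pi_eq {k : ℕ} :
    (Measure.hausdorffMeasure (k:ℝ) : Measure (Fin k → ℝ)) = volume := by
  simpa [Fintype.card_fin] using (MeasureTheory.hausdorffMeasure_pi_real (ι := Fin k))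

lemma vol_le_hausdorff {k : ℕ} (s : Set (EuclideanSpace ℝ (Fin k))) :
    volume s ≤ Measure.hausdorffMeasure (k:ℝ) s := by
  have hk : (0:ℝ) ≤ (k:ℝ) := Nat.cast_nonneg k
  have h1 : LipschitzWith 1 ((MeasurableEquiv.toLp 2 (Fin k → ℝ)).symm) := by
    exact PiLp.lipschitzWith_ofLp 2 _
  have h2 := h1.hausdorffMeasure_image_le hk s
  rw [hausdorff_pi_eq, volume_image_equiv] at h2
  simpa using h2

lemma exists_hausdorff_le_vol (k : ℕ) :
    ∃ M : ℝ≥0∞, M ≠ 0 ∧ M ≠ ∞ ∧ ∀ s : Set (EuclideanSpace ℝ (Fin k)),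
      Measure.hausdorffMeasure (k:ℝ) s ≤ M * volume s := by
  have hk : (0:ℝ) ≤ (k:ℝ) := Nat.cast_nonneg k
  set e := (MeasurableEquiv.toLp 2 (Fin k → ℝ)).symm
  have hanti : AntilipschitzWith ((Fintype.card (Fin k) : ℝ≥0) ^ ((1:ℝ≥0∞)/2).toReal)
      (WithLp.equiv 2 (Fin k → ℝ)) := PiLp.antilipschitzWith_ofLp 2 _
  set c : ℝ≥0 := (Fintype.card (Fin k) : ℝ≥0) ^ ((1:ℝ≥0∞)/2).toReal with hc
  have hsymm : LipschitzWith c (e.symm) := by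
    have : LipschitzWith c (WithLp.equiv 2 (Fin k → ℝ)).symm :=
      hanti.to_rightInverse (WithLp.equiv 2 (Fin k → ℝ)).right_inv
    exact this
  refine ⟨(c : ℝ≥0∞) ^ (k:ℝ) ⊔ 1, ?_, ?_, ?_⟩
  · simp
  · have : ((c : ℝ≥0∞) ^ (k:ℝ)) ≠ ∞ := by
      exact ENNReal.rpow_ne_top_of_nonneg hk ENNReal.coe_ne_top
    simp [this]
  · intro s
    have h2 := hsymm.hausdorffMeasure_image_le hk (e '' s)
    have him : e.symm '' (e '' s) = s := by
      rw [Set.image_image]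
      simp
    rw [him, hausdorff_pi_eq, volume_image_equiv] at h2
    exact h2.trans (by gcongr; exact le_sup_left)

lemma measurableSet_image_open {k n : ℕ} {G : Set (EuclideanSpace ℝ (Fin k))}
    (hG : IsOpen G) {φ : EuclideanSpace ℝ (Fin k) → EuclideanSpace ℝ (Fin n)}
    (hφ : Continuous φ) : MeasurableSet (φ '' G) := by
  have : LocallyCompactSpace G := hG.isOpenEmbedding_subtypeVal.locallyCompactSpace
  have h1 : IsSigmaCompact (univ : Set G) := isSigmaCompact_univ
  have h2 : IsSigmaCompact G := by
    have := Subtype.isSigmaCompact_iff.mp h1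
    simpa [Set.image_univ, Subtype.range_coe] using this
  obtain ⟨K, hKc, hKU⟩ := h2.image hφ
  rw [← hKU]
  exact MeasurableSet.iUnion fun i => (hKc i).isClosed.measurableSet

lemma fderiv_apply_eq_mulVec {k n : ℕ}
    (φ : EuclideanSpace ℝ (Fin k) → EuclideanSpace ℝ (Fin n))
    (y : EuclideanSpace ℝ (Fin k)) (v : EuclideanSpace ℝ (Fin k)) :
    (fun i => fderiv ℝ φ y v i) = (Dmat φ y).mulVec (fun j => v j) := by
  have hv : v = ∑ j, v j • (EuclideanSpace.single j (1:ℝ)) := by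
    ext j'
    have hs : (∑ j, v j • EuclideanSpace.single j (1:ℝ)) j'
        = ∑ j, (v j • EuclideanSpace.single j (1:ℝ)) j' := by
      simp only [WithLp.ofLp_sum, Finset.sum_apply]
    rw [hs]
    simp [EuclideanSpace.single_apply, PiLp.smul_apply]
  funext i
  calc fderiv ℝ φ y v i = fderiv ℝ φ y (∑ j, v j • EuclideanSpace.single j (1:ℝ)) i := by
        rw [← hv]
    _ = (∑ j, fderiv ℝ φ y (v j • EuclideanSpace.single j (1:ℝ))) i := by rw [map_sum]
    _ = ∑ j, (fderiv ℝ φ y (v j • EuclideanSpace.single j (1:ℝ))) i :=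
        by simp only [WithLp.ofLp_sum, Finset.sum_apply]
    _ = (Dmat φ y).mulVec (fun j => v j) i := by
        simp only [_root_.map_smul, PiLp.smul_apply, smul_eq_mul]
        simp [Matrix.mulVec, dotProduct, Dmat, mul_comm]

lemma fderiv_injective {k n : ℕ}
    (φ : EuclideanSpace ℝ (Fin k) → EuclideanSpace ℝ (Fin n))
    (y : EuclideanSpace ℝ (Fin k))
    (hJ : 0 < (Matrix.transpose (Dmat φ y) * Dmat φ y).det) :
    Function.Injective (fderiv ℝ φ y) := by
  set A := Dmat φ y
  have hdet : IsUnit (Matrix.transpose A * A).det := isUnit_iff_ne_zero.mpr (ne_of_gt hJ)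
  intro v w hvw
  have h1 : A.mulVec (fun j => v j) = A.mulVec (fun j => w j) := by
    rw [← fderiv_apply_eq_mulVec, ← fderiv_apply_eq_mulVec, hvw]
  have h2 : (Matrix.transpose A * A).mulVec (fun j => v j)
      = (Matrix.transpose A * A).mulVec (fun j => w j) := by
    rw [← Matrix.mulVec_mulVec, ← Matrix.mulVec_mulVec, h1]
  have h4 : (fun j => v j) = (fun j => w j) := by
    have h5 := congrArg ((Matrix.transpose A * A)⁻¹.mulVec) h2
    rwa [Matrix.mulVec_mulVec, Matrix.mulVec_mulVec, Matrix.nonsing_inv_mul _ hdet,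
      Matrix.one_mulVec, Matrix.one_mulVec] at h5
  ext j
  exact congrFun h4 j

lemma local_bilipschitz {k n : ℕ} {G : Set (EuclideanSpace ℝ (Fin k))} (hGopen : IsOpen G)
    {φ : EuclideanSpace ℝ (Fin k) → EuclideanSpace ℝ (Fin n)} (hφ : ContDiff ℝ 1 φ)
    {y₀ : EuclideanSpace ℝ (Fin k)} (hy₀ : y₀ ∈ G)
    (hinj : Function.Injective (fderiv ℝ φ y₀)) :
    ∃ δ > 0, ball y₀ δ ⊆ G ∧ ∃ C K : ℝ, 1 ≤ C ∧ 1 ≤ K ∧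
      (∀ a ∈ ball y₀ δ, ∀ b ∈ ball y₀ δ, dist (φ a) (φ b) ≤ C * dist a b) ∧
      (∀ a ∈ ball y₀ δ, ∀ b ∈ ball y₀ δ, dist a b ≤ K * dist (φ a) (φ b)) := by
  set f' := fderiv ℝ φ y₀ with hf'
  obtain ⟨K₀, hK₀pos, hanti⟩ :=
    (f'.toLinearMap).exists_antilipschitzWith (LinearMap.ker_eq_bot.mpr hinj)
  have hstrict : HasStrictFDerivAt φ f' y₀ := (hφ.contDiffAt).hasStrictFDerivAt one_ne_zero
  set c : ℝ≥0 := (2*K₀)⁻¹ with hc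
  have hcpos : 0 < c := by positivity
  obtain ⟨s, hs, happrox⟩ := hstrict.approximates_deriv_on_nhds (Or.inr hcpos)
  obtain ⟨δ, hδpos, hδ⟩ := Metric.mem_nhds_iff.mp (Filter.inter_mem hs (hGopen.mem_nhds hy₀))
  have hballs : ball y₀ δ ⊆ s := hδ.trans inter_subset_left
  refine ⟨δ, hδpos, hδ.trans inter_subset_right, max (‖f'‖ + (c:ℝ)) 1, max (2*(K₀:ℝ)) 1,
    le_max_right _ _, le_max_right _ _, ?_, ?_⟩
  · intro a ha b hb
    have h1 : ‖φ a - φ b - f' (a - b)‖ ≤ (c:ℝ) * ‖a - b‖ :=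
      happrox a (hballs ha) b (hballs hb)
    have h2 : ‖f' (a - b)‖ ≤ ‖f'‖ * ‖a - b‖ := f'.le_opNorm _
    have h3 : ‖φ a - φ b‖ ≤ (‖f'‖ + (c:ℝ)) * ‖a - b‖ := by
      calc ‖φ a - φ b‖ = ‖(φ a - φ b - f' (a - b)) + f' (a - b)‖ := by
            congr 1
            abel
        _ ≤ ‖φ a - φ b - f' (a - b)‖ + ‖f' (a - b)‖ := norm_add_le _ _
        _ ≤ (c:ℝ) * ‖a - b‖ + ‖f'‖ * ‖a - b‖ := add_le_add h1 h2
        _ = (‖f'‖ + (c:ℝ)) * ‖a - b‖ := by ring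
    rw [dist_eq_norm, dist_eq_norm]
    calc ‖φ a - φ b‖ ≤ (‖f'‖ + (c:ℝ)) * ‖a - b‖ := h3
      _ ≤ max (‖f'‖ + (c:ℝ)) 1 * ‖a - b‖ := by
          apply mul_le_mul_of_nonneg_right (le_max_left _ _) (norm_nonneg _)
  · intro a ha b hb
    have h1 : ‖φ a - φ b - f' (a - b)‖ ≤ (c:ℝ) * ‖a - b‖ :=
      happrox a (hballs ha) b (hballs hb)
    have h2 : ‖a - b‖ ≤ (K₀:ℝ) * ‖f' (a - b)‖ := by
      have := hanti.le_mul_dist a b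
      simpa [dist_eq_norm, ← map_sub] using this
    have hK₀r : (0:ℝ) < (K₀:ℝ) := hK₀pos
    have hcr : (c:ℝ) = (2*(K₀:ℝ))⁻¹ := by
      rw [hc]; push_cast [NNReal.coe_inv]; norm_num
    have h3 : ‖f' (a - b)‖ ≤ ‖φ a - φ b‖ + (c:ℝ) * ‖a - b‖ := by
      calc ‖f' (a - b)‖ = ‖(φ a - φ b) - (φ a - φ b - f' (a - b))‖ := by
            congr 1
            abel
        _ ≤ ‖φ a - φ b‖ + ‖φ a - φ b - f' (a - b)‖ := norm_sub_le _ _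
        _ ≤ ‖φ a - φ b‖ + (c:ℝ) * ‖a - b‖ := by linarith
    have h4 : ‖a - b‖ ≤ (K₀:ℝ) * ‖φ a - φ b‖ + (1/2) * ‖a - b‖ := by
      have := h2.trans (mul_le_mul_of_nonneg_left h3 hK₀r.le)
      have hhalf : (K₀:ℝ) * ((c:ℝ) * ‖a - b‖) = (1/2) * ‖a - b‖ := by
        rw [hcr]; field_simp
      nlinarith [this]
    have h5 : ‖a - b‖ ≤ 2*(K₀:ℝ) * ‖φ a - φ b‖ := by nlinarith [h4]
    rw [dist_eq_norm, dist_eq_norm]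
    calc ‖a - b‖ ≤ 2*(K₀:ℝ) * ‖φ a - φ b‖ := h5
      _ ≤ max (2*(K₀:ℝ)) 1 * ‖φ a - φ b‖ :=
          mul_le_mul_of_nonneg_right (le_max_left _ _) (norm_nonneg _)

lemma embedding_radius {k n : ℕ} {G : Set (EuclideanSpace ℝ (Fin k))}
    {φ : EuclideanSpace ℝ (Fin k) → EuclideanSpace ℝ (Fin n)}
    (hemb : Topology.IsEmbedding (fun y : G => φ y))
    {U : Set (EuclideanSpace ℝ (Fin k))} (hU : IsOpen U)
    {y₀ : EuclideanSpace ℝ (Fin k)} (hy₀G : y₀ ∈ G) (hy₀U : y₀ ∈ U) :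
    ∃ ε > 0, φ '' G ∩ ball (φ y₀) ε ⊆ φ '' (U ∩ G) := by
  set e : G → EuclideanSpace ℝ (Fin n) := fun y : G => φ y with he
  have hU' : IsOpen (Subtype.val ⁻¹' U : Set G) := hU.preimage continuous_subtype_val
  obtain ⟨V, hVopen, hVeq⟩ := hemb.isInducing.isOpen_iff.mp hU'
  have hxV : φ y₀ ∈ V := by
    have : (⟨y₀, hy₀G⟩ : G) ∈ e ⁻¹' V := by rw [hVeq]; exact hy₀U
    exact this
  obtain ⟨ε, hεpos, hball⟩ := Metric.isOpen_iff.mp hVopen _ hxV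
  refine ⟨ε, hεpos, ?_⟩
  rintro z ⟨⟨g, hgG, rfl⟩, hzball⟩
  have : (⟨g, hgG⟩ : G) ∈ e ⁻¹' V := hball hzball
  rw [hVeq] at this
  exact ⟨g, ⟨this, hgG⟩, rfl⟩

lemma enn_inv_mul_le_of_le {c a b : ℝ≥0∞} (hc0 : c ≠ 0) (hct : c ≠ ∞) (h : a ≤ c * b) :
    c⁻¹ * a ≤ b := by
  have h2 := mul_le_mul_right h c⁻¹
  rwa [← mul_assoc, ENNReal.inv_mul_cancel hc0 hct, one_mul] at h2

lemma enn_div_const_mul {X c w : ℝ≥0∞} (hc0 : c ≠ 0) (hct : c ≠ ∞) :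
    X / (c * w) = c⁻¹ * (X / w) := by
  rw [div_eq_mul_inv, div_eq_mul_inv, ENNReal.mul_inv (Or.inl hc0) (Or.inl hct), mul_left_comm]

lemma enn_div_eq_mul_div_const_mul {X c w : ℝ≥0∞} (hc0 : c ≠ 0) (hct : c ≠ ∞) :
    X / w = c * (X / (c * w)) := by
  rw [enn_div_const_mul hc0 hct, ← mul_assoc, ENNReal.mul_inv_cancel hc0 hct, one_mul]

lemma tendsto_scale {l : ℝ} (hl : 0 < l) :
    Tendsto (fun r : ℝ => l * r) (𝓝[>] (0:ℝ)) (𝓝[>] (0:ℝ)) := by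
  rw [tendsto_nhdsWithin_iff]
  constructor
  · have h := (continuous_const.mul continuous_id : Continuous fun r : ℝ => l * r).tendsto (0:ℝ)
    simp only [Pi.mul_apply, mul_zero] at h
    exact h.mono_left nhdsWithin_le_nhds
  · filter_upwards [self_mem_nhdsWithin] with r hr
    exact mul_pos hl hr

lemma squeeze_scaled {F Gf : ℝ → ℝ≥0∞} {c : ℝ≥0∞} (hc : c ≠ ∞) {l : ℝ} (hl : 0 < l)
    (hF : Tendsto F (𝓝[>] (0:ℝ)) (𝓝 0))
    (hle : ∀ᶠ r in 𝓝[>] (0:ℝ), Gf r ≤ c * F (l * r)) :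
    Tendsto Gf (𝓝[>] (0:ℝ)) (𝓝 0) := by
  have h2 : Tendsto (fun r => c * F (l * r)) (𝓝[>] (0:ℝ)) (𝓝 0) := by
    have h3 := hF.comp (tendsto_scale hl)
    have h4 := ENNReal.Tendsto.const_mul h3 (Or.inr hc)
    simpa [Function.comp] using h4
  exact tendsto_of_tendsto_of_tendsto_of_le_of_le' tendsto_const_nhds h2
    (Eventually.of_forall fun _ => zero_le) hle

lemma tendsto_equiv {k n : ℕ} (x : EuclideanSpace ℝ (Fin n)) (y₀ : EuclideanSpace ℝ (Fin k))
    (μ : Measure (EuclideanSpace ℝ (Fin n)))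
    (S : Set (EuclideanSpace ℝ (Fin k))) (E : Set (EuclideanSpace ℝ (Fin n)))
    {ε₀ C K : ℝ} (hε₀ : 0 < ε₀) (hC : 1 ≤ C) (hK : 1 ≤ K)
    {κ₁ κ₂ : ℝ≥0∞} (hκ₁0 : κ₁ ≠ 0) (hκ₁t : κ₁ ≠ ∞) (hκ₂0 : κ₂ ≠ 0) (hκ₂t : κ₂ ≠ ∞)
    {h : ℝ} (hh : 0 ≤ h)
    (hE : ∀ r : ℝ, 0 < r → r < ε₀ →
        volume (ball y₀ (r / C) \ S) ≤ κ₁ * μ (ball x r \ E) ∧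
        μ (ball x r \ E) ≤ κ₂ * volume (ball y₀ (K * r) \ S))
    (h0 : ∀ r : ℝ, 0 < r → r < ε₀ →
        volume (ball y₀ (r / C)) ≤ κ₁ * μ (ball x r) ∧
        μ (ball x r) ≤ κ₂ * volume (ball y₀ (K * r))) :
    x ∈ spt μ ∧
    (Tendsto (fun r : ℝ => μ (ball x r \ E) / (μ (ball x r) * ENNReal.ofReal (r ^ h)))
        (𝓝[>] (0:ℝ)) (𝓝 0) ↔
      Tendsto (fun r : ℝ => volume (ball y₀ r \ S) / ENNReal.ofReal (r ^ ((k:ℝ) + h)))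
        (𝓝[>] (0:ℝ)) (𝓝 0)) := by
  have hC0 : (0:ℝ) < C := lt_of_lt_of_le one_pos hC
  have hK0 : (0:ℝ) < K := lt_of_lt_of_le one_pos hK
  set ι : ℝ≥0∞ := volume (ball (0 : EuclideanSpace ℝ (Fin k)) 1) with hιdef
  have hι0 : ι ≠ 0 := (measure_ball_pos _ _ one_pos).ne'
  have hιt : ι ≠ ∞ := measure_ball_lt_top.ne
  have hvol : ∀ ρ : ℝ, 0 < ρ →
      volume (ball y₀ ρ) = ENNReal.ofReal (ρ ^ (k:ℝ)) * ι := by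
    intro ρ hρ
    rw [Measure.addHaar_ball_of_pos volume y₀ hρ]
    congr 2
    rw [finrank_euclideanSpace_fin, ← Real.rpow_natCast ρ k]
  -- positivity of μ on small balls
  have hpos_small : ∀ r : ℝ, 0 < r → r < ε₀ → 0 < μ (ball x r) := by
    intro r hr hrε
    have h1 := (h0 r hr hrε).1
    have h2 : 0 < volume (ball y₀ (r / C)) := measure_ball_pos _ _ (div_pos hr hC0)
    by_contra hcon
    have h3 : μ (ball x r) = 0 := le_antisymm (not_lt.mp hcon) zero_le
    rw [h3, mul_zero] at h1
    exact absurd (le_antisymm h1 zero_le) h2.ne'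
  have hspt : x ∈ spt μ := by
    intro r hr
    rcases lt_or_ge r ε₀ with hcase | hcase
    · exact hpos_small r hr hcase
    · have h1 : 0 < μ (ball x (ε₀ / 2)) :=
        hpos_small _ (half_pos hε₀) (half_lt_self hε₀)
      exact lt_of_lt_of_le h1 (measure_mono (ball_subset_ball (le_trans (half_le_self hε₀.le) hcase)))
  refine ⟨hspt, ?_, ?_⟩
  · -- forward: sdp ratio → density ratio
    intro hR
    set c₅ : ℝ≥0∞ := κ₂ * ι * ENNReal.ofReal (K ^ (k:ℝ) * C ^ ((k:ℝ) + h)) with hc₅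
    have hKC : (0:ℝ) < K ^ (k:ℝ) * C ^ ((k:ℝ) + h) :=
      mul_pos (Real.rpow_pos_of_pos hK0 _) (Real.rpow_pos_of_pos hC0 _)
    have hc₅0 : c₅ ≠ 0 := by
      simp only [hc₅, mul_ne_zero_iff]
      exact ⟨⟨hκ₂0, hι0⟩, (ENNReal.ofReal_pos.mpr hKC).ne'⟩
    have hc₅t : c₅ ≠ ∞ := by
      simp only [hc₅]
      exact ENNReal.mul_ne_top (ENNReal.mul_ne_top hκ₂t hιt) ENNReal.ofReal_ne_top
    apply squeeze_scaled (c := κ₁ * c₅) (ENNReal.mul_ne_top hκ₁t hc₅t) hC0 hR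
    have hmem : Ioo (0:ℝ) (ε₀ / C) ∈ 𝓝[>] (0:ℝ) :=
      Ioo_mem_nhdsGT_of_mem ⟨le_refl 0, div_pos hε₀ hC0⟩
    filter_upwards [hmem] with ρ hρ
    obtain ⟨hρ0, hρε⟩ := hρ
    set r := C * ρ with hrdef
    have hr0 : 0 < r := mul_pos hC0 hρ0
    have hrε : r < ε₀ := by
      rw [hrdef]
      calc C * ρ < C * (ε₀ / C) := mul_lt_mul_of_pos_left hρε hC0
        _ = ε₀ := by field_simp
    have hrC : r / C = ρ := by rw [hrdef]; field_simp
    have hnum : volume (ball y₀ ρ \ S) ≤ κ₁ * μ (ball x r \ E) := by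
      have := (hE r hr0 hrε).1
      rwa [hrC] at this
    set w : ℝ≥0∞ := ENNReal.ofReal (ρ ^ ((k:ℝ) + h)) with hwdef
    have hden : μ (ball x r) * ENNReal.ofReal (r ^ h) ≤ c₅ * w := by
      have h1 : μ (ball x r) ≤ κ₂ * (ENNReal.ofReal ((K * r) ^ (k:ℝ)) * ι) := by
        have := (h0 r hr0 hrε).2
        rwa [hvol _ (mul_pos hK0 hr0)] at this
      have hreal : (K * r) ^ (k:ℝ) * r ^ h = K ^ (k:ℝ) * C ^ ((k:ℝ) + h) * ρ ^ ((k:ℝ) + h) := by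
        rw [hrdef]
        rw [Real.mul_rpow hK0.le (mul_pos hC0 hρ0).le,
            Real.mul_rpow hC0.le hρ0.le, Real.mul_rpow hC0.le hρ0.le,
            Real.rpow_add hC0, Real.rpow_add hρ0]
        ring
      calc μ (ball x r) * ENNReal.ofReal (r ^ h)
          ≤ κ₂ * (ENNReal.ofReal ((K * r) ^ (k:ℝ)) * ι) * ENNReal.ofReal (r ^ h) := by gcongr
        _ = κ₂ * ι * (ENNReal.ofReal ((K * r) ^ (k:ℝ)) * ENNReal.ofReal (r ^ h)) := by ring
        _ = κ₂ * ι * ENNReal.ofReal ((K * r) ^ (k:ℝ) * r ^ h) := by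
            rw [← ENNReal.ofReal_mul (Real.rpow_nonneg (mul_pos hK0 hr0).le _)]
        _ = κ₂ * ι * ENNReal.ofReal (K ^ (k:ℝ) * C ^ ((k:ℝ) + h) * ρ ^ ((k:ℝ) + h)) := by
            rw [hreal]
        _ = c₅ * w := by
            rw [hc₅, hwdef, ENNReal.ofReal_mul hKC.le]
            ring
    have hkey : μ (ball x r \ E) / w
        ≤ c₅ * (μ (ball x r \ E) / (μ (ball x r) * ENNReal.ofReal (r ^ h))) := by
      calc μ (ball x r \ E) / w = c₅ * (μ (ball x r \ E) / (c₅ * w)) :=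
            enn_div_eq_mul_div_const_mul hc₅0 hc₅t
        _ ≤ c₅ * (μ (ball x r \ E) / (μ (ball x r) * ENNReal.ofReal (r ^ h))) :=
            mul_le_mul_right (ENNReal.div_le_div_left hden _) c₅
    calc volume (ball y₀ ρ \ S) / w ≤ (κ₁ * μ (ball x r \ E)) / w :=
          ENNReal.div_le_div_right hnum _
      _ = κ₁ * (μ (ball x r \ E) / w) := by rw [mul_div_assoc]
      _ ≤ κ₁ * (c₅ * (μ (ball x r \ E) / (μ (ball x r) * ENNReal.ofReal (r ^ h)))) :=
          mul_le_mul_right hkey κ₁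
      _ = κ₁ * c₅ * (μ (ball x r \ E) / (μ (ball x r) * ENNReal.ofReal (r ^ h))) :=
          (mul_assoc _ _ _).symm
  · -- backward: density ratio → sdp ratio
    intro hD
    set q : ℝ≥0∞ := ENNReal.ofReal (K ^ ((k:ℝ) + h) * C ^ (k:ℝ)) with hq
    have hqpos : (0:ℝ) < K ^ ((k:ℝ) + h) * C ^ (k:ℝ) :=
      mul_pos (Real.rpow_pos_of_pos hK0 _) (Real.rpow_pos_of_pos hC0 _)
    have hq0 : q ≠ 0 := (ENNReal.ofReal_pos.mpr hqpos).ne'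
    have hqt : q ≠ ∞ := ENNReal.ofReal_ne_top
    set c₇ : ℝ≥0∞ := κ₁⁻¹ * ι * q⁻¹ with hc₇
    have hc₇0 : c₇ ≠ 0 := by
      simp only [hc₇, mul_ne_zero_iff]
      exact ⟨⟨ENNReal.inv_ne_zero.mpr hκ₁t, hι0⟩, ENNReal.inv_ne_zero.mpr hqt⟩
    have hc₇t : c₇ ≠ ∞ := by
      simp only [hc₇]
      exact ENNReal.mul_ne_top (ENNReal.mul_ne_top (ENNReal.inv_ne_top.mpr hκ₁0) hιt)
        (ENNReal.inv_ne_top.mpr hq0)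
    have hct : c₇⁻¹ * κ₂ ≠ ∞ :=
      ENNReal.mul_ne_top (ENNReal.inv_ne_top.mpr hc₇0) hκ₂t
    apply squeeze_scaled (c := c₇⁻¹ * κ₂) hct hK0 hD
    have hmem : Ioo (0:ℝ) ε₀ ∈ 𝓝[>] (0:ℝ) := Ioo_mem_nhdsGT_of_mem ⟨le_refl 0, hε₀⟩
    filter_upwards [hmem] with r hr
    obtain ⟨hr0, hrε⟩ := hr
    set w : ℝ≥0∞ := ENNReal.ofReal ((K * r) ^ ((k:ℝ) + h)) with hwdef
    have hreal : (K * r) ^ ((k:ℝ) + h) = K ^ ((k:ℝ) + h) * C ^ (k:ℝ) * ((r / C) ^ (k:ℝ) * r ^ h) := by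
      rw [Real.mul_rpow hK0.le hr0.le, Real.div_rpow hr0.le hC0.le, Real.rpow_add hr0]
      field_simp
    have hden : c₇ * w ≤ μ (ball x r) * ENNReal.ofReal (r ^ h) := by
      have h1 : κ₁⁻¹ * volume (ball y₀ (r / C)) ≤ μ (ball x r) :=
        enn_inv_mul_le_of_le hκ₁0 hκ₁t (h0 r hr0 hrε).1
      have h2 : c₇ * w = κ₁⁻¹ * ENNReal.ofReal ((r / C) ^ (k:ℝ)) * ι * ENNReal.ofReal (r ^ h) := by
        rw [hc₇, hwdef, hreal, ENNReal.ofReal_mul hqpos.le, ← hq]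
        rw [ENNReal.ofReal_mul (Real.rpow_nonneg (div_pos hr0 hC0).le _)]
        calc κ₁⁻¹ * ι * q⁻¹ * (q * (ENNReal.ofReal ((r / C) ^ (k:ℝ)) * ENNReal.ofReal (r ^ h)))
            = κ₁⁻¹ * ι * (q⁻¹ * q) * (ENNReal.ofReal ((r / C) ^ (k:ℝ)) * ENNReal.ofReal (r ^ h)) := by
              ring
          _ = κ₁⁻¹ * ι * (ENNReal.ofReal ((r / C) ^ (k:ℝ)) * ENNReal.ofReal (r ^ h)) := by
              rw [ENNReal.inv_mul_cancel hq0 hqt, mul_one]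
          _ = κ₁⁻¹ * ENNReal.ofReal ((r / C) ^ (k:ℝ)) * ι * ENNReal.ofReal (r ^ h) := by ring
      rw [h2]
      have h3 : κ₁⁻¹ * ENNReal.ofReal ((r / C) ^ (k:ℝ)) * ι
          = κ₁⁻¹ * volume (ball y₀ (r / C)) := by
        rw [hvol _ (div_pos hr0 hC0), mul_assoc]
      rw [h3]
      exact mul_le_mul_left h1 _
    have hnum : μ (ball x r \ E) ≤ κ₂ * volume (ball y₀ (K * r) \ S) := (hE r hr0 hrε).2
    calc μ (ball x r \ E) / (μ (ball x r) * ENNReal.ofReal (r ^ h))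
        ≤ μ (ball x r \ E) / (c₇ * w) := ENNReal.div_le_div_left hden _
      _ = c₇⁻¹ * (μ (ball x r \ E) / w) := enn_div_const_mul hc₇0 hc₇t
      _ ≤ c₇⁻¹ * ((κ₂ * volume (ball y₀ (K * r) \ S)) / w) :=
          mul_le_mul_right (ENNReal.div_le_div_right hnum _) _
      _ = c₇⁻¹ * (κ₂ * (volume (ball y₀ (K * r) \ S) / w)) := by rw [mul_div_assoc]
      _ = c₇⁻¹ * κ₂ * (volume (ball y₀ (K * r) \ S) / w) := (mul_assoc _ _ _).symm

lemma key_sandwich {k n : ℕ} {G : Set (EuclideanSpace ℝ (Fin k))} (hGopen : IsOpen G)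
    {φ : EuclideanSpace ℝ (Fin k) → EuclideanSpace ℝ (Fin n)} (hφ : ContDiff ℝ 1 φ)
    (hemb : Topology.IsEmbedding (fun y : G => φ y))
    {y₀ : EuclideanSpace ℝ (Fin k)} (hy₀ : y₀ ∈ G)
    (hinj : Function.Injective (fderiv ℝ φ y₀)) :
    ∃ (ε₀ : ℝ), 0 < ε₀ ∧ ∃ (C K : ℝ), 1 ≤ C ∧ 1 ≤ K ∧ ∃ κ₁ κ₂ : ℝ≥0∞,
      κ₁ ≠ 0 ∧ κ₁ ≠ ∞ ∧ κ₂ ≠ 0 ∧ κ₂ ≠ ∞ ∧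
      ∀ (A : Set (EuclideanSpace ℝ (Fin n))) (r : ℝ), 0 < r → r < ε₀ →
        volume (ball y₀ (r / C) \ φ ⁻¹' A)
            ≤ κ₁ * (Measure.hausdorffMeasure (k:ℝ)).restrict (φ '' G) (ball (φ y₀) r \ A) ∧
        (Measure.hausdorffMeasure (k:ℝ)).restrict (φ '' G) (ball (φ y₀) r \ A)
            ≤ κ₂ * volume (ball y₀ (K * r) \ φ ⁻¹' A) := by
  obtain ⟨δ, hδpos, hUG, C, K, hC1, hK1, hlip, hanti⟩ := local_bilipschitz hGopen hφ hy₀ hinj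
  set U := ball y₀ δ with hUdef
  have hy₀U : y₀ ∈ U := mem_ball_self hδpos
  obtain ⟨ε₁, hε₁pos, hε₁⟩ := embedding_radius hemb isOpen_ball hy₀ hy₀U
  obtain ⟨M, hM0, hMt, hM⟩ := exists_hausdorff_le_vol k
  have hGm : MeasurableSet (φ '' G) := measurableSet_image_open hGopen hφ.continuous
  have hC0 : (0:ℝ) < C := lt_of_lt_of_le one_pos hC1
  have hK0 : (0:ℝ) < K := lt_of_lt_of_le one_pos hK1
  have hknn : (0:ℝ) ≤ (k:ℝ) := Nat.cast_nonneg k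
  have hinjOn : Set.InjOn φ U := by
    intro a ha b hb hab
    have h := hanti a ha b hb
    rw [hab, dist_self, mul_zero] at h
    exact dist_le_zero.mp h
  set g := Function.invFunOn φ U with hgdef
  have hginv : ∀ t ∈ U, g (φ t) = t := fun t ht => hinjOn.leftInvOn_invFunOn ht
  set x := φ y₀ with hxdef
  refine ⟨min ε₁ δ, lt_min hε₁pos hδpos, C, K, hC1, hK1,
    ((K.toNNReal : ℝ≥0∞)) ^ (k:ℝ), ((C.toNNReal : ℝ≥0∞)) ^ (k:ℝ) * M, ?_, ?_, ?_, ?_, ?_⟩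
  · exact (ENNReal.rpow_pos (by simpa using hK0) ENNReal.coe_ne_top).ne'
  · exact ENNReal.rpow_ne_top_of_nonneg hknn ENNReal.coe_ne_top
  · exact mul_ne_zero (ENNReal.rpow_pos (by simpa using hC0) ENNReal.coe_ne_top).ne' hM0
  · exact ENNReal.mul_ne_top (ENNReal.rpow_ne_top_of_nonneg hknn ENNReal.coe_ne_top) hMt
  intro A r hr hrε
  have hrε₁ : r ≤ ε₁ := le_of_lt (lt_of_lt_of_le hrε (min_le_left _ _))
  have hrδ : r < δ := lt_of_lt_of_le hrε (min_le_right _ _)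
  set T := U ∩ φ ⁻¹' (ball x r \ A) with hTdef
  have hTU : T ⊆ U := inter_subset_left
  have h_im_T : φ '' T ⊆ (ball x r \ A) ∩ φ '' G := by
    rintro z ⟨t, ⟨htU, htb⟩, rfl⟩
    exact ⟨htb, mem_image_of_mem φ (hUG htU)⟩
  have h_rev : (ball x r \ A) ∩ φ '' G ⊆ φ '' T := by
    rintro z ⟨⟨hzb, hzA⟩, hzG⟩
    have : z ∈ φ '' (U ∩ G) := hε₁ ⟨hzG, (ball_subset_ball hrε₁) hzb⟩
    obtain ⟨t, ⟨htU, _⟩, rfl⟩ := this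
    exact ⟨t, ⟨htU, ⟨hzb, hzA⟩⟩, rfl⟩
  have hμ_eq : (Measure.hausdorffMeasure (k:ℝ)).restrict (φ '' G) (ball x r \ A)
      = Measure.hausdorffMeasure (k:ℝ) ((ball x r \ A) ∩ φ '' G) :=
    Measure.restrict_apply' hGm
  have hgT : g '' (φ '' T) = T := by
    rw [Set.image_image]
    apply Set.EqOn.image_eq_self
    intro t ht
    exact hginv t (hTU ht)
  constructor
  · -- lower bound
    have h1 : ball y₀ (r / C) \ φ ⁻¹' A ⊆ T := by
      rintro t ⟨htb, htA⟩
      have htU : t ∈ U := by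
        have : dist t y₀ < r / C := htb
        have hrC : r / C ≤ r := div_le_self hr.le hC1
        exact mem_ball.mpr (lt_of_lt_of_le this (hrC.trans hrδ.le))
      refine ⟨htU, ⟨?_, htA⟩⟩
      have := hlip t htU y₀ hy₀U
      have h2 : dist (φ t) x ≤ C * dist t y₀ := this
      have h3 : C * dist t y₀ < C * (r / C) :=
        mul_lt_mul_of_pos_left htb hC0
      rw [mul_div_cancel₀ r hC0.ne'] at h3
      exact mem_ball.mpr (lt_of_le_of_lt h2 h3)
    have h2 : volume (ball y₀ (r / C) \ φ ⁻¹' A) ≤ volume T := measure_mono h1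
    have h3 : volume T ≤ Measure.hausdorffMeasure (k:ℝ) T := vol_le_hausdorff T
    have hglip : LipschitzOnWith K.toNNReal g (φ '' U) := by
      apply LipschitzOnWith.of_dist_le_mul
      rintro p ⟨a, haU, rfl⟩ q ⟨b, hbU, rfl⟩
      rw [hginv a haU, hginv b hbU, Real.coe_toNNReal K hK0.le]
      exact hanti a haU b hbU
    have h4 : Measure.hausdorffMeasure (k:ℝ) (g '' (φ '' T))
        ≤ (K.toNNReal : ℝ≥0∞) ^ (k:ℝ) * Measure.hausdorffMeasure (k:ℝ) (φ '' T) :=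
      (hglip.mono (Set.image_mono (f := φ) hTU)).hausdorffMeasure_image_le hknn
    rw [hgT] at h4
    have h5 : Measure.hausdorffMeasure (k:ℝ) (φ '' T)
        ≤ Measure.hausdorffMeasure (k:ℝ) ((ball x r \ A) ∩ φ '' G) := measure_mono h_im_T
    rw [hμ_eq]
    calc volume (ball y₀ (r / C) \ φ ⁻¹' A) ≤ Measure.hausdorffMeasure (k:ℝ) T :=
          h2.trans h3
      _ ≤ (K.toNNReal : ℝ≥0∞) ^ (k:ℝ) * Measure.hausdorffMeasure (k:ℝ) (φ '' T) := h4
      _ ≤ (K.toNNReal : ℝ≥0∞) ^ (k:ℝ)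
            * Measure.hausdorffMeasure (k:ℝ) ((ball x r \ A) ∩ φ '' G) := by gcongr
  · -- upper bound
    have hφlip : LipschitzOnWith C.toNNReal φ U := by
      apply LipschitzOnWith.of_dist_le_mul
      intro a ha b hb
      rw [Real.coe_toNNReal C hC0.le]
      exact hlip a ha b hb
    have h1 : Measure.hausdorffMeasure (k:ℝ) (φ '' T)
        ≤ (C.toNNReal : ℝ≥0∞) ^ (k:ℝ) * Measure.hausdorffMeasure (k:ℝ) T :=
      (hφlip.mono hTU).hausdorffMeasure_image_le hknn
    have h2 : Measure.hausdorffMeasure (k:ℝ) T ≤ M * volume T := hM T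
    have h3 : T ⊆ ball y₀ (K * r) \ φ ⁻¹' A := by
      rintro t ⟨htU, ⟨htb, htA⟩⟩
      refine ⟨?_, htA⟩
      have h4 : dist t y₀ ≤ K * dist (φ t) x := hanti t htU y₀ hy₀U
      have h5 : K * dist (φ t) x < K * r := mul_lt_mul_of_pos_left (mem_ball.mp htb) hK0
      exact mem_ball.mpr (lt_of_le_of_lt h4 h5)
    rw [hμ_eq]
    calc Measure.hausdorffMeasure (k:ℝ) ((ball x r \ A) ∩ φ '' G)
        ≤ Measure.hausdorffMeasure (k:ℝ) (φ '' T) := measure_mono h_rev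
      _ ≤ (C.toNNReal : ℝ≥0∞) ^ (k:ℝ) * Measure.hausdorffMeasure (k:ℝ) T := h1
      _ ≤ (C.toNNReal : ℝ≥0∞) ^ (k:ℝ) * (M * volume T) := by gcongr
      _ = (C.toNNReal : ℝ≥0∞) ^ (k:ℝ) * M * volume T := by rw [mul_assoc]
      _ ≤ (C.toNNReal : ℝ≥0∞) ^ (k:ℝ) * M * volume (ball y₀ (K * r) \ φ ⁻¹' A) := by
          gcongr

end Stmt16Aux

theorem stmt_16 {k n : ℕ} (hkn : k ≤ n)
    (G : Set (EuclideanSpace ℝ (Fin k))) (hGopen : IsOpen G)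
    (hGbdd : Bornology.IsBounded G)
    (φ : EuclideanSpace ℝ (Fin k) → EuclideanSpace ℝ (Fin n))
    (hφ : ContDiff ℝ 1 φ)
    (hemb : Topology.IsEmbedding (fun y : G => φ y))
    (hJ : ∀ y ∈ G, 0 < (Matrix.transpose (Dmat φ y) * Dmat φ y).det)
    (E : Set (EuclideanSpace ℝ (Fin n))) (h : ℝ) (hh : 0 ≤ h) :
    sdp ((Measure.hausdorffMeasure (k : ℝ)).restrict (φ '' G)) h E ∩ φ '' G =
      φ '' (densityPts ((k : ℝ) + h) (φ ⁻¹' E) ∩ G) := by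
  set μ := (Measure.hausdorffMeasure (k:ℝ)).restrict (φ '' G) with hμ
  have main : ∀ y₀ ∈ G,
      (φ y₀ ∈ spt μ) ∧
      (Filter.Tendsto (fun r : ℝ => μ (Metric.ball (φ y₀) r \ E) /
          (μ (Metric.ball (φ y₀) r) * ENNReal.ofReal (r ^ h))) (nhdsWithin 0 (Set.Ioi 0)) (nhds 0) ↔
       Filter.Tendsto (fun r : ℝ => volume (Metric.ball y₀ r \ φ ⁻¹' E) /
          ENNReal.ofReal (r ^ ((k:ℝ) + h))) (nhdsWithin 0 (Set.Ioi 0)) (nhds 0)) := by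
    intro y₀ hy₀
    have hinj := Stmt16Aux.fderiv_injective φ y₀ (hJ y₀ hy₀)
    obtain ⟨ε₀, hε₀, C, K, hC, hK, κ₁, κ₂, hκ₁0, hκ₁t, hκ₂0, hκ₂t, hsand⟩ :=
      Stmt16Aux.key_sandwich hGopen hφ hemb hy₀ hinj
    exact Stmt16Aux.tendsto_equiv (φ y₀) y₀ μ (φ ⁻¹' E) E hε₀ hC hK hκ₁0 hκ₁t hκ₂0 hκ₂t hh
      (fun r hr hrε => hsand E r hr hrε)
      (fun r hr hrε => by simpa using hsand ∅ r hr hrε)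
  ext x
  constructor
  · rintro ⟨⟨hspt, htend⟩, y₀, hy₀, rfl⟩
    exact ⟨y₀, ⟨((main y₀ hy₀).2).mp htend, hy₀⟩, rfl⟩
  · rintro ⟨y₀, ⟨hdens, hy₀⟩, rfl⟩
    exact ⟨⟨(main y₀ hy₀).1, ((main y₀ hy₀).2).mpr hdens⟩, ⟨y₀, hy₀, rfl⟩⟩
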